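/- arXiv:0801.1530 — 5 statements merged into one kernel-verified Lean document; each statement's English description precedes it below -/
import Mathlib

section
/- Let J = diag(I_p, −I_q) be an N×N matrix with N = p + q. For any A ∈ GL_N(ℂ) and any integer s, the matrix X = A J A⁻¹ J satisfies tr(Xˢ J) = p − q. -/
open Matrix

lemma trJ_aux (p q : ℕ) :
    (∑ i : Fin (p + q), (if (i : ℕ) < p then (1 : ℂ) else -1)) = (p : ℂ) - (q : ℂ) := by
  rw [Fin.sum_univ_eq_sum_range (fun i => if i < p then (1 : ℂ) else -1) (p + q)]
  rw [Finset.sum_ite, Finset.sum_const, Finset.sum_const]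
  have h1 : Finset.filter (fun i => i < p) (Finset.range (p + q)) = Finset.range p := by
    ext i
    simp only [Finset.mem_filter, Finset.mem_range]
    omega
  have h2 : (Finset.filter (fun i => ¬ i < p) (Finset.range (p + q))).card = q := by
    have := Finset.card_filter_add_card_filter_not
      (s := Finset.range (p + q)) (p := fun i => i < p)
    simp only [Finset.card_range, h1] at this ⊢
    omega
  rw [h1, h2, Finset.card_range]
  ring

/-- `tr(Xˢ J) = p - q` for every integer `s`, where `X = A J A⁻¹ J`. -/
theorem stmt1 (p q N : ℕ) (hN : N = p + q)
    (J A X : Matrix (Fin N) (Fin N) ℂ)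
    (hJ : J = Matrix.diagonal (fun i : Fin N => if (i : ℕ) < p then (1 : ℂ) else -1))
    (hA : IsUnit A)
    (hX : X = A * J * A⁻¹ * J)
    (s : ℤ) :
    Matrix.trace (X ^ s * J) = (p : ℂ) - (q : ℂ) := by
  have hJ2 : J * J = 1 := by
    rw [hJ, Matrix.diagonal_mul_diagonal]
    convert Matrix.diagonal_one
    split_ifs <;> ring
  have htrJ : Matrix.trace J = (p : ℂ) - (q : ℂ) := by
    subst hN
    rw [hJ, Matrix.trace_diagonal]
    exact trJ_aux p q
  have hAA : A * A⁻¹ = 1 := Matrix.mul_nonsing_inv A ((Matrix.isUnit_iff_isUnit_det A).mp hA)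
  have hA'A : A⁻¹ * A = 1 := Matrix.nonsing_inv_mul A ((Matrix.isUnit_iff_isUnit_det A).mp hA)
  have hJ2' : ∀ M : Matrix (Fin N) (Fin N) ℂ, J * (J * M) = M := by
    intro M; rw [← mul_assoc, hJ2, one_mul]
  have hAA' : ∀ M : Matrix (Fin N) (Fin N) ℂ, A * (A⁻¹ * M) = M := by
    intro M; rw [← mul_assoc, hAA, one_mul]
  have hA'A' : ∀ M : Matrix (Fin N) (Fin N) ℂ, A⁻¹ * (A * M) = M := by
    intro M; rw [← mul_assoc, hA'A, one_mul]
  have hXJX : X * J * X = J := by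
    subst hX
    simp only [mul_assoc, hJ2', hAA', hA'A']
  have hXinv1 : X * (J * X * J) = 1 := by
    rw [← mul_assoc, ← mul_assoc, hXJX, hJ2]
  have hXinv2 : (J * X * J) * X = 1 := by
    rw [mul_assoc, mul_assoc, ← mul_assoc X J X, hXJX, hJ2]
  set x : (Matrix (Fin N) (Fin N) ℂ)ˣ := ⟨X, J * X * J, hXinv1, hXinv2⟩ with hxdef
  have hx : X = (x : Matrix (Fin N) (Fin N) ℂ) := rfl
  set j : (Matrix (Fin N) (Fin N) ℂ)ˣ := ⟨J, J, hJ2, hJ2⟩ with hjdef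
  have hj : J = (j : Matrix (Fin N) (Fin N) ℂ) := rfl
  have hjj : j * j = 1 := Units.ext hJ2
  have hjinv : j⁻¹ = j := by
    rw [inv_eq_iff_mul_eq_one, hjj]
  have hxjx : x * j * x = j := Units.ext hXJX
  have hxinv : x⁻¹ = j * x * j := by
    rw [inv_eq_iff_mul_eq_one]
    calc x * (j * x * j) = (x * j * x) * j := by group
    _ = 1 := by rw [hxjx, hjj]
  have hkey : ∀ k : ℤ, j * x ^ k * j = x ^ (-k) := by
    intro k
    have h := map_zpow (MulAut.conj j) x k
    simp only [MulAut.conj_apply, hjinv] at h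
    rw [h, ← hxinv, _root_.inv_zpow, _root_.zpow_neg]
  set k := s / 2 with hk
  set r := s % 2 with hr
  have h1 : j * x ^ (-k) = x ^ k * j := by
    have := hkey (-k)
    rw [neg_neg] at this
    calc j * x ^ (-k) = (j * x ^ (-k) * j) * j := by rw [mul_assoc, hjj, mul_one]
    _ = x ^ k * j := by rw [this]
  have h2 : x ^ k * (x ^ r * j) * (x ^ k)⁻¹ = x ^ s * j := by
    rw [← _root_.zpow_neg, mul_assoc, mul_assoc, h1, ← mul_assoc, ← mul_assoc, ← _root_.zpow_add, ← _root_.zpow_add]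
    have : k + r + k = s := by omega
    rw [this]
  have hXs : X ^ s = (↑(x ^ s) : Matrix (Fin N) (Fin N) ℂ) := by
    rw [Matrix.coe_units_zpow, hx]
  have hcyc : Matrix.trace (X ^ s * J) = Matrix.trace (↑(x ^ r * j) : Matrix (Fin N) (Fin N) ℂ) := by
    rw [hXs, hj, ← Units.val_mul, ← h2, Units.val_mul, Units.val_mul,
      Matrix.trace_mul_cycle, ← Units.val_mul, ← Units.val_mul, ← mul_assoc,
      inv_mul_cancel, one_mul]
  rw [hcyc]
  rcases Int.emod_two_eq s with h | h
  · rw [← hr] at h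
    rw [h, zpow_zero, one_mul]
    exact htrJ
  · rw [← hr] at h
    rw [h, zpow_one, Units.val_mul]
    show Matrix.trace (X * J) = _
    rw [hX, mul_assoc (A * J * A⁻¹) J J, hJ2, mul_one, Matrix.trace_mul_cycle, hA'A, one_mul, htrJ]
end

section
/- With X = A J A⁻¹ J and X⁻¹ = J A J A⁻¹ (J = diag(I_p, −I_q), N = p+q), the matrix X + X⁻¹ is block diagonal: its (i,j) entry vanishes unless both i,j ≤ p or both i,j > p. Equivalently, (X)_{ij} = −(X⁻¹)_{ij} whenever exactly one of i,j lies in {1,…,p}. -/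
open Matrix

/-- `X + X⁻¹` is block diagonal: its (i,j) entry vanishes when exactly one of
i, j lies in the first block; equivalently `X i j = −(X⁻¹) i j` for such i, j. -/
theorem stmt5 (p q N : ℕ) (hN : N = p + q)
    (J A X : Matrix (Fin N) (Fin N) ℂ)
    (hJ : J = Matrix.diagonal (fun i : Fin N => if (i : ℕ) < p then (1 : ℂ) else -1))
    (hA : IsUnit A)
    (hX : X = A * J * A⁻¹ * J) :
    ∀ i j : Fin N, ¬ (((i : ℕ) < p) ↔ ((j : ℕ) < p)) →
      (X + X⁻¹) i j = 0 ∧ X i j = -(X⁻¹ i j) := by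
  have hdet : IsUnit A.det := (Matrix.isUnit_iff_isUnit_det A).mp hA
  have hAA : A * A⁻¹ = 1 := Matrix.mul_nonsing_inv A hdet
  have hAA' : A⁻¹ * A = 1 := Matrix.nonsing_inv_mul A hdet
  have hJ2 : J * J = 1 := by
    rw [hJ, Matrix.diagonal_mul_diagonal]
    have : (fun i : Fin N => (if (i:ℕ) < p then (1:ℂ) else -1) * (if (i:ℕ) < p then (1:ℂ) else -1)) = fun _ => (1:ℂ) := by
      funext i; by_cases h : (i:ℕ) < p <;> simp [h]
    rw [this, Matrix.diagonal_one]
  have h2 : ∀ M : Matrix (Fin N) (Fin N) ℂ, J * (J * M) = M := fun M => by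
    rw [← mul_assoc, hJ2, one_mul]
  have hA2 : ∀ M : Matrix (Fin N) (Fin N) ℂ, A⁻¹ * (A * M) = M := fun M => by
    rw [← mul_assoc, hAA', one_mul]
  have hXinv : X⁻¹ = J * A * J * A⁻¹ := by
    apply Matrix.inv_eq_right_inv
    rw [hX]
    simp only [mul_assoc]
    rw [h2, hA2, h2, hAA]
  have hc : X⁻¹ = J * X * J := by
    rw [hXinv, hX]
    simp only [mul_assoc, hJ2, mul_one]
  intro i j hij
  have key : X⁻¹ i j = -(X i j) := by
    rw [hc, hJ, Matrix.mul_diagonal, Matrix.diagonal_mul]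
    by_cases hi : (i : ℕ) < p <;> by_cases hj : (j : ℕ) < p <;>
      simp [hi, hj] at hij ⊢ <;> ring
  refine ⟨?_, by rw [key, neg_neg]⟩
  simp [key]
end

section
/- Let N = p+q, J = diag(I_p, −I_q), A ∈ GL_N(ℂ), X = A J A⁻¹ J, and let r, j be indices with both ≤ p or both > p. Set Q_{rj} = J A⁻¹ J E_{rj} A + A⁻¹ E_{rj} J A J and define χ on block diagonal matrices by χ(diag(X₁,X₂)) = q·tr(X₁) − p·tr(X₂). Then χ(Q_{rj}) = (q−p)/2 · (X + X⁻¹)_{jr} + N·δ_{rj} if r, j ≤ p, and χ(Q_{rj}) = (q−p)/2 · (X + X⁻¹)_{jr} − N·δ_{rj} if r, j > p. -/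
open Matrix

lemma trE_mul {n : ℕ} (r j : Fin n) (M : Matrix (Fin n) (Fin n) ℂ) :
    Matrix.trace (Matrix.single r j (1:ℂ) * M) = M j r := by
  simp [Matrix.trace, Matrix.diag, Matrix.mul_apply, Matrix.single,
    Finset.sum_ite_eq, ite_and]

/-- value of χ on `Q_{rj} = J A⁻¹ J E_{rj} A + A⁻¹ E_{rj} J A J` for
r, j in the same block. -/
theorem stmt7 (p q N : ℕ) (hN : N = p + q)
    (χ : Matrix (Fin N) (Fin N) ℂ → ℂ)
    (hχ : ∀ x : Matrix (Fin N) (Fin N) ℂ,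
      χ x = (q : ℂ) * ∑ i ∈ Finset.univ.filter (fun i : Fin N => (i : ℕ) < p), x i i
            - (p : ℂ) * ∑ i ∈ Finset.univ.filter (fun i : Fin N => ¬ (i : ℕ) < p), x i i)
    (J A X : Matrix (Fin N) (Fin N) ℂ)
    (hJ : J = Matrix.diagonal (fun i : Fin N => if (i : ℕ) < p then (1 : ℂ) else -1))
    (hA : IsUnit A)
    (hX : X = A * J * A⁻¹ * J)
    (r j : Fin N)
    (Q : Matrix (Fin N) (Fin N) ℂ)
    (hQ : Q = J * A⁻¹ * J * Matrix.single r j 1 * A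
            + A⁻¹ * Matrix.single r j 1 * J * A * J) :
    ((r : ℕ) < p → (j : ℕ) < p →
      χ Q = ((q : ℂ) - (p : ℂ)) / 2 * ((X + X⁻¹) j r)
            + (N : ℂ) * (if r = j then 1 else 0)) ∧
    (¬ (r : ℕ) < p → ¬ (j : ℕ) < p →
      χ Q = ((q : ℂ) - (p : ℂ)) / 2 * ((X + X⁻¹) j r)
            - (N : ℂ) * (if r = j then 1 else 0)) := by
  have hdet : IsUnit A.det := (Matrix.isUnit_iff_isUnit_det A).mp hA
  have hAA : A * A⁻¹ = 1 := Matrix.mul_nonsing_inv A hdet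
  have hA'A : A⁻¹ * A = 1 := Matrix.nonsing_inv_mul A hdet
  have hJJ : J * J = 1 := by
    rw [hJ, Matrix.diagonal_mul_diagonal]
    ext i k
    by_cases h : i = k <;> simp [Matrix.diagonal, Matrix.one_apply, h] <;> split <;> ring
  have hXinv : X⁻¹ = J * A * J * A⁻¹ := by
    apply Matrix.inv_eq_right_inv
    rw [hX]
    calc A * J * A⁻¹ * J * (J * A * J * A⁻¹)
        = A * J * A⁻¹ * (J * J) * A * J * A⁻¹ := by noncomm_ring
      _ = 1 := by
          rw [hJJ, show A * J * A⁻¹ * 1 * A * J * A⁻¹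
            = A * J * (A⁻¹ * A) * J * A⁻¹ by noncomm_ring, hA'A,
            show A * J * 1 * J * A⁻¹ = A * (J * J) * A⁻¹ by noncomm_ring, hJJ,
            show A * 1 * A⁻¹ = A * A⁻¹ by noncomm_ring, hAA]
  have htr : Matrix.trace Q = X j r + X⁻¹ j r := by
    rw [hQ, Matrix.trace_add]
    have h1 : Matrix.trace (J * A⁻¹ * J * Matrix.single r j 1 * A) = X j r := by
      rw [Matrix.trace_mul_cycle (J * A⁻¹ * J) (Matrix.single r j 1) A,
        Matrix.trace_mul_comm, trE_mul]
      rw [hX, show A * (J * A⁻¹ * J) = A * J * A⁻¹ * J by noncomm_ring]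
    have h2 : Matrix.trace (A⁻¹ * Matrix.single r j 1 * J * A * J) = X⁻¹ j r := by
      rw [show A⁻¹ * Matrix.single r j 1 * J * A * J
          = A⁻¹ * (Matrix.single r j 1 * J * A * J) by noncomm_ring,
        Matrix.trace_mul_comm,
        show Matrix.single r j 1 * J * A * J * A⁻¹
          = Matrix.single r j (1:ℂ) * (J * A * J * A⁻¹) by noncomm_ring,
        trE_mul, hXinv]
    rw [h1, h2]
  have htrJ : Matrix.trace (J * Q) = 2 * J j r := by
    rw [hQ, Matrix.mul_add, Matrix.trace_add]
    have h1 : Matrix.trace (J * (J * A⁻¹ * J * Matrix.single r j 1 * A)) = J j r := by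
      rw [show J * (J * A⁻¹ * J * Matrix.single r j 1 * A)
          = (J * J) * (A⁻¹ * (J * Matrix.single r j 1 * A)) by noncomm_ring,
        hJJ, one_mul, Matrix.trace_mul_comm,
        show J * Matrix.single r j 1 * A * A⁻¹
          = J * Matrix.single r j 1 * (A * A⁻¹) by noncomm_ring,
        hAA, mul_one, Matrix.trace_mul_comm, trE_mul]
    have h2 : Matrix.trace (J * (A⁻¹ * Matrix.single r j 1 * J * A * J)) = J j r := by
      rw [Matrix.trace_mul_comm,
        show A⁻¹ * Matrix.single r j 1 * J * A * J * J
          = A⁻¹ * (Matrix.single r j 1 * (J * (A * (J * J)))) by noncomm_ring,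
        hJJ, mul_one, Matrix.trace_mul_comm,
        show Matrix.single r j 1 * (J * A) * A⁻¹
          = Matrix.single r j (1:ℂ) * (J * (A * A⁻¹)) by noncomm_ring,
        hAA, mul_one, trE_mul]
    rw [h1, h2]; ring
  -- express the traces via the two partial sums
  set S1 := ∑ i ∈ Finset.univ.filter (fun i : Fin N => (i : ℕ) < p), Q i i with hS1
  set S2 := ∑ i ∈ Finset.univ.filter (fun i : Fin N => ¬ (i : ℕ) < p), Q i i with hS2
  have hsum : S1 + S2 = X j r + X⁻¹ j r := by
    rw [← htr, Matrix.trace, hS1, hS2]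
    exact Finset.sum_filter_add_sum_filter_not _ _ _
  have hdiff : S1 - S2 = 2 * J j r := by
    rw [← htrJ]
    have e1 : Matrix.trace (J * Q)
        = ∑ i : Fin N, (if (i : ℕ) < p then (1:ℂ) else -1) * Q i i := by
      rw [hJ, Matrix.trace]
      simp [Matrix.diag, Matrix.diagonal_mul]
    rw [e1, ← Finset.sum_filter_add_sum_filter_not Finset.univ (fun i : Fin N => (i : ℕ) < p)]
    have e2 : ∑ x ∈ Finset.univ.filter (fun i : Fin N => (i : ℕ) < p),
        (if (x : ℕ) < p then (1:ℂ) else -1) * Q x x = S1 := by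
      rw [hS1]
      exact Finset.sum_congr rfl fun i hi => by
        simp only [Finset.mem_filter] at hi; rw [if_pos hi.2, one_mul]
    have e3 : ∑ x ∈ Finset.univ.filter (fun i : Fin N => ¬ (i : ℕ) < p),
        (if (x : ℕ) < p then (1:ℂ) else -1) * Q x x = -S2 := by
      rw [hS2, ← Finset.sum_neg_distrib]
      exact Finset.sum_congr rfl fun i hi => by
        simp only [Finset.mem_filter] at hi; rw [if_neg hi.2]; ring
    rw [e2, e3]; ring
  have hmain : χ Q = ((q : ℂ) - (p : ℂ)) / 2 * (X j r + X⁻¹ j r)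
      + ((p : ℂ) + (q : ℂ)) * J j r := by
    rw [hχ Q, ← hS1, ← hS2]
    linear_combination ((q : ℂ) - (p : ℂ)) / 2 * hsum + ((q : ℂ) + (p : ℂ)) / 2 * hdiff
  have hNc : (N : ℂ) = (p : ℂ) + q := by rw [hN]; push_cast; ring
  constructor
  · intro hr hj
    rw [hmain, Matrix.add_apply]
    have : J j r = if r = j then 1 else 0 := by
      rw [hJ, Matrix.diagonal_apply]
      rcases eq_or_ne r j with h | h
      · simp [h, hj]
      · simp [h, Ne.symm h]
    rw [this, hNc] <;> ring
  · intro hr hj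
    rw [hmain, Matrix.add_apply]
    have : J j r = -(if r = j then 1 else 0) := by
      rw [hJ, Matrix.diagonal_apply]
      rcases eq_or_ne r j with h | h
      · simp [h, hj]
      · simp [h, Ne.symm h]
    rw [this, hNc] <;> ring
end

section
/- Let B = A⁻¹ E_{rj} J A with J = diag(I_p, −I_q), A ∈ GL_N(ℂ), N = p+q, and r, j both ≤ p or both > p. Writing B₁ for the top-left p×p block and B₄ for the bottom-right q×q block of B, one has 2 tr(B₁) − 2 tr(B₄) = (X + X⁻¹)_{jr} where X = A J A⁻¹ J, and tr(B₁) + tr(B₄) = δ_{rj} if r,j ≤ p and −δ_{rj} if r,j > p. -/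
open Matrix

lemma trace_mul_std {n : Type*} [Fintype n] [DecidableEq n]
    (M : Matrix n n ℂ) (r j : n) (c : ℂ) :
    Matrix.trace (M * Matrix.single r j c) = c * M j r := by
  simp only [Matrix.trace, Matrix.diag, Matrix.mul_apply, Matrix.single,
    Matrix.of_apply]
  rw [Finset.sum_comm]
  rw [Finset.sum_eq_single r]
  · simp [mul_comm]
  · intro b _ hb; simp [Ne.symm hb]
  · simp

lemma std_mul_diag {n : Type*} [Fintype n] [DecidableEq n]
    (d : n → ℂ) (r j : n) (c : ℂ) :
    Matrix.single r j c * Matrix.diagonal d = Matrix.single r j (c * d j) := by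
  ext a b
  simp only [Matrix.mul_diagonal, Matrix.single, Matrix.of_apply]
  by_cases h1 : r = a <;> by_cases h2 : j = b <;> simp [h1, h2] <;> subst h2 <;> simp

lemma diag_mul_std {n : Type*} [Fintype n] [DecidableEq n]
    (d : n → ℂ) (r j : n) (c : ℂ) :
    Matrix.diagonal d * Matrix.single r j c = Matrix.single r j (d r * c) := by
  ext a b
  simp only [Matrix.diagonal_mul, Matrix.single, Matrix.of_apply]
  by_cases h1 : r = a <;> by_cases h2 : j = b <;> simp [h1, h2] <;> subst h1 <;> simp

/-- block traces of `B = A⁻¹ E_{rj} J A`: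
`2 tr B₁ − 2 tr B₄ = (X + X⁻¹)_{jr}` and `tr B₁ + tr B₄ = ±δ_{rj}`. -/
theorem stmt8 (p q N : ℕ) (hN : N = p + q)
    (J A X B : Matrix (Fin N) (Fin N) ℂ)
    (hJ : J = Matrix.diagonal (fun i : Fin N => if (i : ℕ) < p then (1 : ℂ) else -1))
    (hA : IsUnit A)
    (hX : X = A * J * A⁻¹ * J)
    (r j : Fin N)
    (hrj : ((r : ℕ) < p ∧ (j : ℕ) < p) ∨ (¬ (r : ℕ) < p ∧ ¬ (j : ℕ) < p))
    (hB : B = A⁻¹ * Matrix.single r j 1 * J * A) :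
    (2 * ∑ i ∈ Finset.univ.filter (fun i : Fin N => (i : ℕ) < p), B i i
      - 2 * ∑ i ∈ Finset.univ.filter (fun i : Fin N => ¬ (i : ℕ) < p), B i i
      = (X + X⁻¹) j r) ∧
    ((r : ℕ) < p → (j : ℕ) < p →
      ∑ i ∈ Finset.univ.filter (fun i : Fin N => (i : ℕ) < p), B i i
      + ∑ i ∈ Finset.univ.filter (fun i : Fin N => ¬ (i : ℕ) < p), B i i
      = (if r = j then 1 else 0)) ∧
    (¬ (r : ℕ) < p → ¬ (j : ℕ) < p →
      ∑ i ∈ Finset.univ.filter (fun i : Fin N => (i : ℕ) < p), B i i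
      + ∑ i ∈ Finset.univ.filter (fun i : Fin N => ¬ (i : ℕ) < p), B i i
      = -(if r = j then 1 else 0)) := by
  set d : Fin N → ℂ := fun i => if (i : ℕ) < p then (1 : ℂ) else -1 with hd
  have hAd : IsUnit A.det := (Matrix.isUnit_iff_isUnit_det A).mp hA
  have hA1 : A * A⁻¹ = 1 := Matrix.mul_nonsing_inv A hAd
  have hA2 : A⁻¹ * A = 1 := Matrix.nonsing_inv_mul A hAd
  have hJJ : J * J = 1 := by
    rw [hJ, Matrix.diagonal_mul_diagonal]
    convert Matrix.diagonal_one using 2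
    ext i; by_cases h : (i : ℕ) < p <;> simp [hd, h]
  have hdrj : d r * d j = 1 := by
    rcases hrj with ⟨h1, h2⟩ | ⟨h1, h2⟩ <;> simp [hd, h1, h2]
  have hAJA : A * J * A⁻¹ = X * J := by
    rw [hX, Matrix.mul_assoc (A * J * A⁻¹) J J, hJJ, Matrix.mul_one]
  -- sum = trace B
  have hSum : ∑ i ∈ Finset.univ.filter (fun i : Fin N => (i : ℕ) < p), B i i
      + ∑ i ∈ Finset.univ.filter (fun i : Fin N => ¬ (i : ℕ) < p), B i i
      = Matrix.trace B := by
    rw [Matrix.trace]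
    exact Finset.sum_filter_add_sum_filter_not _ _ _
  -- difference = trace (J * B)
  have hDiff : ∑ i ∈ Finset.univ.filter (fun i : Fin N => (i : ℕ) < p), B i i
      - ∑ i ∈ Finset.univ.filter (fun i : Fin N => ¬ (i : ℕ) < p), B i i
      = Matrix.trace (J * B) := by
    rw [Matrix.trace]
    have h1 : ∀ i : Fin N, (J * B).diag i = if (i : ℕ) < p then B i i else -(B i i) := by
      intro i
      simp only [Matrix.diag, hJ, Matrix.diagonal_mul]
      by_cases h : (i : ℕ) < p <;> simp [hd, h]
    rw [Finset.sum_congr rfl (fun i _ => h1 i), Finset.sum_ite, sub_eq_add_neg,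
      ← Finset.sum_neg_distrib]
  -- trace B
  have htrB : Matrix.trace B = (if r = j then d j else 0) := by
    rw [hB, Matrix.trace_mul_comm (A⁻¹ * Matrix.single r j 1 * J) A,
      ← Matrix.mul_assoc, ← Matrix.mul_assoc, hA1, Matrix.one_mul, hJ, std_mul_diag, one_mul,
      Matrix.trace]
    simp only [Matrix.diag, Matrix.single, Matrix.of_apply]
    rw [Finset.sum_eq_single j]
    · by_cases h : r = j <;> simp [h]
    · intro b _ hb; simp [Ne.symm hb]
    · simp
  -- J E J = E
  have hJEJ : J * (Matrix.single r j 1 * J) = Matrix.single r j 1 := by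
    rw [hJ, std_mul_diag, diag_mul_std, one_mul]
    rw [show d r * d j = 1 from hdrj]
  -- trace (J * B) = X j r
  have htrJB : Matrix.trace (J * B) = X j r := by
    rw [hB]
    rw [show J * (A⁻¹ * Matrix.single r j 1 * J * A)
        = (J * A⁻¹ * Matrix.single r j 1 * J) * A by
      simp only [Matrix.mul_assoc]]
    rw [Matrix.trace_mul_comm]
    rw [show A * (J * A⁻¹ * Matrix.single r j 1 * J)
        = (A * J * A⁻¹) * (Matrix.single r j 1 * J) by
      simp only [Matrix.mul_assoc]]
    rw [hAJA, Matrix.mul_assoc, hJEJ, trace_mul_std, one_mul]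
  -- X⁻¹ entry
  have hXinv : X⁻¹ = J * X * J := by
    have h1 : X * (J * A * J * A⁻¹) = 1 := by
      rw [hX]
      calc A * J * A⁻¹ * J * (J * A * J * A⁻¹)
          = A * J * (A⁻¹ * ((J * J) * (A * (J * A⁻¹)))) := by
            simp only [Matrix.mul_assoc]
        _ = 1 := by
            rw [hJJ, Matrix.one_mul, ← Matrix.mul_assoc A⁻¹ A, hA2, Matrix.one_mul,
              ← Matrix.mul_assoc, Matrix.mul_assoc A J J, hJJ, Matrix.mul_one, hA1]
    rw [Matrix.inv_eq_right_inv h1, hX]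
    calc J * A * J * A⁻¹
        = J * (A * J * A⁻¹) * (J * J) := by
          rw [hJJ, Matrix.mul_one]; simp only [Matrix.mul_assoc]
      _ = J * (A * J * A⁻¹ * J) * J := by simp only [Matrix.mul_assoc]
  have hXinv_jr : X⁻¹ j r = X j r := by
    rw [hXinv, hJ]
    rw [show Matrix.diagonal d * X * Matrix.diagonal d
        = Matrix.diagonal d * (X * Matrix.diagonal d) from Matrix.mul_assoc _ _ _]
    rw [Matrix.diagonal_mul, Matrix.mul_diagonal]
    have : d j * (X j r * d r) = (d r * d j) * X j r := by ring
    rw [this, hdrj, one_mul]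
  have hS : (∑ i ∈ Finset.univ.filter (fun i : Fin N => (i : ℕ) < p), B i i)
      - ∑ i ∈ Finset.univ.filter (fun i : Fin N => ¬ (i : ℕ) < p), B i i = X j r :=
    hDiff.trans htrJB
  refine ⟨?_, ?_, ?_⟩
  · rw [Matrix.add_apply, hXinv_jr]
    linear_combination (2 : ℂ) * hS
  · intro hr hj
    rw [hSum, htrB]
    simp [hd, hj]
  · intro hr hj
    rw [hSum, htrB]
    by_cases h : r = j <;> simp [hd, h, hj]
end

section
/- In the dAHA H(κ₁, κ₂) of type B_n, with ỹ_i = y_i − (κ₂/2)γ_i − (κ₁/2)Σ_{k>i}S_{ik} + (κ₁/2)Σ_{k<i}S_{ik} − (κ₁/2)Σ_{k≠i}S_{ik}γ_iγ_k, for i < j one has [ỹ_i, R_j] + [R_i, ỹ_j] = 0, where R_i = −(κ₁/2)Σ_{k>i}S_{ik} + (κ₁/2)Σ_{k<i}S_{ik} − (κ₁/2)Σ_{k≠i}S_{ik}γ_iγ_k; more precisely [ỹ_i, R_j] = (κ₁/2)(S_{ij}ỹ_j − S_{ij}ỹ_i − S_{ij}ỹ_jγ_iγ_j − S_{ij}ỹ_iγ_iγ_j)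 and [R_i, ỹ_j] = −[ỹ_i, R_j]. -/
/-- in the type `B_n` dAHA `H(κ₁,κ₂)`, with
`R_i = −(κ₁/2)Σ_{k>i}S_{ik} + (κ₁/2)Σ_{k<i}S_{ik} − (κ₁/2)Σ_{k≠i}S_{ik}γ_iγ_k`, for
`i < j` one has `[ỹ_i, R_j] = (κ₁/2)(S_{ij}ỹ_j − S_{ij}ỹ_i − S_{ij}ỹ_jγ_iγ_j
− S_{ij}ỹ_iγ_iγ_j)`, `[R_i, ỹ_j] = −[ỹ_i, R_j]`, hence `[ỹ_i,R_j] + [R_i,ỹ_j] = 0`. -/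
theorem stmt15 (n : ℕ) (κ₁ κ₂ : ℂ)
    {A : Type*} [Ring A] [Algebra ℂ A]
    (S : Fin n → Fin n → A) (γ : Fin n → A) (yt : Fin n → A)
    -- relations of the Weyl group W of type Bₙ among the S_{ij} and γ_i :
    (hS2 : ∀ i j, i ≠ j → S i j * S i j = 1)
    (hSsymm : ∀ i j, S i j = S j i)
    (hγ2 : ∀ i, γ i * γ i = 1)
    (hγγ : ∀ i j, γ i * γ j = γ j * γ i)
    (hSγ : ∀ i j, i ≠ j → S i j * γ i = γ j * S i j)
    (hSγ' : ∀ i j k, i ≠ j → k ≠ i → k ≠ j → S i j * γ k = γ k * S i j)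
    (hSS : ∀ i j k, i ≠ j → j ≠ k → i ≠ k → S i j * S j k = S i k * S i j)
    (hSS' : ∀ i j k l, i ≠ j → k ≠ l → i ≠ k → i ≠ l → j ≠ k → j ≠ l →
      S i j * S k l = S k l * S i j)
    -- W-covariance of the Drinfeld generators ỹ :
    (hSyt : ∀ i j, i ≠ j → S i j * yt i = yt j * S i j)
    (hSyt' : ∀ i j m, i ≠ j → m ≠ i → m ≠ j → S i j * yt m = yt m * S i j)
    (hγyt : ∀ i, γ i * yt i = -(yt i * γ i))
    (hγyt' : ∀ i j, i ≠ j → γ i * yt j = yt j * γ i)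
    -- the elements R_i :
    (R : Fin n → A)
    (hR : ∀ i, R i
      = - (κ₁ / 2) • (∑ k ∈ Finset.univ.filter (fun k : Fin n => i < k), S i k)
        + (κ₁ / 2) • (∑ k ∈ Finset.univ.filter (fun k : Fin n => k < i), S i k)
        - (κ₁ / 2) • (∑ k ∈ Finset.univ.filter (fun k : Fin n => k ≠ i),
            S i k * γ i * γ k))
    (i j : Fin n) (hij : i < j) :
    (yt i * R j - R j * yt i
      = (κ₁ / 2) • (S i j * yt j - S i j * yt i
          - S i j * yt j * γ i * γ j - S i j * yt i * γ i * γ j)) ∧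
    (R i * yt j - yt j * R i = -(yt i * R j - R j * yt i)) ∧
    ((yt i * R j - R j * yt i) + (R i * yt j - yt j * R i) = 0) := by
  have hne : i ≠ j := ne_of_lt hij
  have w1 : yt i * S i j = S i j * yt j := by
    have h := hSyt j i hne.symm
    rw [← hSsymm i j] at h
    exact h.symm
  have w2 : yt j * S i j = S i j * yt i := (hSyt i j hne).symm
  have g1 : γ i * yt i = -(yt i * γ i) := hγyt i
  have g2 : γ j * yt j = -(yt j * γ j) := hγyt j
  have g3 : γ j * yt i = yt i * γ j := hγyt' j i hne.symm
  have g4 : γ i * yt j = yt j * γ i := hγyt' i j hne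
  have gg : γ j * γ i = γ i * γ j := hγγ j i
  have w1' : ∀ x : A, yt i * (S i j * x) = S i j * (yt j * x) := fun x => by
    rw [← mul_assoc, w1, mul_assoc]
  have w2' : ∀ x : A, yt j * (S i j * x) = S i j * (yt i * x) := fun x => by
    rw [← mul_assoc, w2, mul_assoc]
  have g1' : ∀ x : A, γ i * (yt i * x) = -(yt i * (γ i * x)) := fun x => by
    rw [← mul_assoc, g1, neg_mul, mul_assoc]
  have g2' : ∀ x : A, γ j * (yt j * x) = -(yt j * (γ j * x)) := fun x => by
    rw [← mul_assoc, g2, neg_mul, mul_assoc]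
  have g3' : ∀ x : A, γ j * (yt i * x) = yt i * (γ j * x) := fun x => by
    rw [← mul_assoc, g3, mul_assoc]
  have g4' : ∀ x : A, γ i * (yt j * x) = yt j * (γ i * x) := fun x => by
    rw [← mul_assoc, g4, mul_assoc]
  have gg' : ∀ x : A, γ j * (γ i * x) = γ i * (γ j * x) := fun x => by
    rw [← mul_assoc, gg, mul_assoc]
  -- commutator with the first sum of R j : zero
  have hA : yt i * (∑ k ∈ Finset.univ.filter (fun k : Fin n => j < k), S j k)
      = (∑ k ∈ Finset.univ.filter (fun k : Fin n => j < k), S j k) * yt i := by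
    rw [Finset.mul_sum, Finset.sum_mul]
    refine Finset.sum_congr rfl fun k hk => ?_
    have hk' : j < k := (Finset.mem_filter.mp hk).2
    exact (hSyt' j k i (ne_of_lt hk') hne (ne_of_lt (hij.trans hk'))).symm
  -- commutator with the second sum of R j
  have hB : yt i * (∑ k ∈ Finset.univ.filter (fun k : Fin n => k < j), S j k)
      - (∑ k ∈ Finset.univ.filter (fun k : Fin n => k < j), S j k) * yt i
      = S i j * yt j - S i j * yt i := by
    rw [Finset.mul_sum, Finset.sum_mul, ← Finset.sum_sub_distrib]
    refine (Finset.sum_eq_single i (fun k hk hki => ?_) (fun h => ?_)).trans ?_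
    · have hk' : k < j := (Finset.mem_filter.mp hk).2
      rw [hSyt' j k i (ne_of_gt hk') hne (Ne.symm hki), sub_self]
    · exact absurd (Finset.mem_filter.mpr ⟨Finset.mem_univ i, hij⟩ : i ∈ Finset.univ.filter (fun k : Fin n => k < j)) h
    · rw [← hSsymm i j, w1, hSyt i j hne]
  -- commutator with the third sum of R j
  have hC : yt i * (∑ k ∈ Finset.univ.filter (fun k : Fin n => k ≠ j), S j k * γ j * γ k)
      - (∑ k ∈ Finset.univ.filter (fun k : Fin n => k ≠ j), S j k * γ j * γ k) * yt i
      = S i j * yt j * γ i * γ j + S i j * yt i * γ i * γ j := by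
    rw [Finset.mul_sum, Finset.sum_mul, ← Finset.sum_sub_distrib]
    refine (Finset.sum_eq_single i (fun k hk hki => ?_) (fun h => ?_)).trans ?_
    · have hkj : k ≠ j := (Finset.mem_filter.mp hk).2
      have c1 : Commute (yt i) (S j k) :=
        (hSyt' j k i (Ne.symm hkj) hne (Ne.symm hki)).symm
      have c2 : Commute (yt i) (γ j) := g3.symm
      have c3 : Commute (yt i) (γ k) := (hγyt' k i hki).symm
      exact sub_eq_zero_of_eq ((c1.mul_right c2).mul_right c3)
    · exact absurd (Finset.mem_filter.mpr ⟨Finset.mem_univ i, hne⟩ : i ∈ Finset.univ.filter (fun k : Fin n => k ≠ j)) h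
    · rw [← hSsymm i j]
      simp only [mul_assoc, w1, w1', g1, g1', g3, g3', gg, gg', mul_neg, neg_mul, sub_neg_eq_add]
  -- part 1
  have h1 : yt i * R j - R j * yt i
      = (κ₁ / 2) • (S i j * yt j - S i j * yt i
          - S i j * yt j * γ i * γ j - S i j * yt i * γ i * γ j) := by
    rw [hR j]
    simp only [mul_add, add_mul, mul_sub, sub_mul, mul_smul_comm, smul_mul_assoc]
    rw [hA, eq_add_of_sub_eq hB, eq_add_of_sub_eq hC]
    module
  -- commutators for R i
  have hA2 : (∑ k ∈ Finset.univ.filter (fun k : Fin n => i < k), S i k) * yt j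
      - yt j * (∑ k ∈ Finset.univ.filter (fun k : Fin n => i < k), S i k)
      = S i j * yt j - S i j * yt i := by
    rw [Finset.mul_sum, Finset.sum_mul, ← Finset.sum_sub_distrib]
    refine (Finset.sum_eq_single j (fun k hk hkj => ?_) (fun h => ?_)).trans ?_
    · have hk' : i < k := (Finset.mem_filter.mp hk).2
      rw [hSyt' i k j (ne_of_lt hk') hne.symm (Ne.symm hkj), sub_self]
    · exact absurd (Finset.mem_filter.mpr ⟨Finset.mem_univ j, hij⟩ : j ∈ Finset.univ.filter (fun k : Fin n => i < k)) h
    · rw [w2]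
  have hB2 : (∑ k ∈ Finset.univ.filter (fun k : Fin n => k < i), S i k) * yt j
      = yt j * (∑ k ∈ Finset.univ.filter (fun k : Fin n => k < i), S i k) := by
    rw [Finset.mul_sum, Finset.sum_mul]
    refine Finset.sum_congr rfl fun k hk => ?_
    have hk' : k < i := (Finset.mem_filter.mp hk).2
    exact hSyt' i k j (ne_of_gt hk') hne.symm (ne_of_gt (hk'.trans hij))
  have hC2 : (∑ k ∈ Finset.univ.filter (fun k : Fin n => k ≠ i), S i k * γ i * γ k) * yt j
      - yt j * (∑ k ∈ Finset.univ.filter (fun k : Fin n => k ≠ i), S i k * γ i * γ k)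
      = -(S i j * yt j * γ i * γ j) - S i j * yt i * γ i * γ j := by
    rw [Finset.mul_sum, Finset.sum_mul, ← Finset.sum_sub_distrib]
    refine (Finset.sum_eq_single j (fun k hk hkj => ?_) (fun h => ?_)).trans ?_
    · have hki : k ≠ i := (Finset.mem_filter.mp hk).2
      have c1 : Commute (yt j) (S i k) :=
        (hSyt' i k j (Ne.symm hki) hne.symm (Ne.symm hkj)).symm
      have c2 : Commute (yt j) (γ i) := g4.symm
      have c3 : Commute (yt j) (γ k) := (hγyt' k j hkj).symm
      exact sub_eq_zero_of_eq (((c1.mul_right c2).mul_right c3).symm)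
    · exact absurd (Finset.mem_filter.mpr ⟨Finset.mem_univ j, hne.symm⟩ : j ∈ Finset.univ.filter (fun k : Fin n => k ≠ i)) h
    · simp only [mul_assoc, w2, w2', g2, g2', g4, g4', gg, gg', mul_neg, neg_mul]
  -- part 2
  have h2 : R i * yt j - yt j * R i = -(yt i * R j - R j * yt i) := by
    rw [h1, hR i]
    simp only [mul_add, add_mul, mul_sub, sub_mul, mul_smul_comm, smul_mul_assoc]
    rw [hB2, eq_add_of_sub_eq hA2, eq_add_of_sub_eq hC2]
    module
  exact ⟨h1, h2, by rw [h2, add_neg_cancel]⟩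
end
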